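/- arXiv:1305.4559 — 2 statements merged into one kernel-verified Lean document; each statement's English description precedes it below -/
import Mathlib

section
/- Let G be a finite connected simple graph on n ≥ 2 vertices, let x_0 be any vertex of G, and let (x_0, x_1, x_2, x_3, x_4) be a simple random walk on G started at x_0. Then P( d(x_0, x_4) < 4 ) ≥ 1/(4 n^{2/3}). -/
open scoped Classical

/-- One-step transition weight of the simple random walk on `G`:
`1/deg a` if `a ∼ b`, and `0` otherwise. -/
noncomputable def stepWt {V : Type} [Fintype V] (G : SimpleGraph V) (a b : V) : ℝ :=
  if G.Adj a b then ((G.degree a : ℝ))⁻¹ else 0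

/-- Probability that the simple random walk on `G` of length `t`, started at `x0`,
produces a trajectory satisfying the event `E`. -/
noncomputable def walkProb {V : Type} [Fintype V] (G : SimpleGraph V) (t : ℕ) (x0 : V)
    (E : (Fin (t + 1) → V) → Prop) : ℝ :=
  ∑ p : Fin (t + 1) → V,
    if p 0 = x0 ∧ E p then ∏ i : Fin t, stepWt G (p i.castSucc) (p i.succ) else 0

/-- Expectation of the functional `f` of the trajectory of the simple random walk on `G`
of length `t`, started at `x0`. -/
noncomputable def walkExp {V : Type} [Fintype V] (G : SimpleGraph V) (t : ℕ) (x0 : V)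
    (f : (Fin (t + 1) → V) → ℝ) : ℝ :=
  ∑ p : Fin (t + 1) → V,
    (if p 0 = x0 then ∏ i : Fin t, stepWt G (p i.castSucc) (p i.succ) else 0) * f p

set_option linter.unusedSectionVars false

namespace FourStep
variable {V : Type} [Fintype V]

lemma stepWt_nonneg (G : SimpleGraph V) (a b : V) : 0 ≤ stepWt G a b := by
  unfold stepWt; split <;> positivity

lemma adj_of_stepWt_ne_zero {G : SimpleGraph V} {a b : V} (h : stepWt G a b ≠ 0) : G.Adj a b := by
  by_contra hadj; simp [stepWt, hadj] at h

lemma sum_adj_indicator (G : SimpleGraph V) (a : V) :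
    ∑ b, (if G.Adj a b then (1:ℝ) else 0) = (G.degree a : ℝ) := by
  rw [Finset.sum_boole]
  congr 1
  rw [← SimpleGraph.neighborFinset_eq_filter, SimpleGraph.degree]

lemma sum_stepWt (G : SimpleGraph V) {a : V} (h : 0 < G.degree a) :
    ∑ b, stepWt G a b = 1 := by
  have h2 : ∑ b, stepWt G a b = ∑ b, ((G.degree a : ℝ))⁻¹ * (if G.Adj a b then (1:ℝ) else 0) := by
    refine Finset.sum_congr rfl fun b _ => ?_
    unfold stepWt; split <;> simp
  rw [h2, ← Finset.mul_sum, sum_adj_indicator]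
  have : (G.degree a : ℝ) ≠ 0 := by positivity
  field_simp

variable (G : SimpleGraph V) (x0 : V) (D : ℝ)

noncomputable def hiD (v : V) : ℝ := if D < (G.degree v : ℝ) then 1 else 0
noncomputable def nu (b : V) : ℝ :=
  hiD G D b * ∑ x1, hiD G D x1 * (stepWt G x0 x1 * stepWt G x1 b)

lemma hiD_nonneg (v : V) : 0 ≤ hiD G D v := by unfold hiD; split <;> norm_num
lemma hiD_le_one (v : V) : hiD G D v ≤ 1 := by unfold hiD; split <;> norm_num

lemma stepWt_le_invD {a : V} (hD : 0 < D) (ha : D < (G.degree a : ℝ)) (b : V) :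
    stepWt G a b ≤ D⁻¹ := by
  have h1 : ((G.degree a : ℝ))⁻¹ ≤ D⁻¹ := by
    apply inv_anti₀ hD ha.le
  unfold stepWt
  split
  · exact h1
  · positivity

lemma nu_le (hdeg : ∀ v, 0 < G.degree v) (hD : 0 < D) (b : V) :
    nu G x0 D b ≤ D⁻¹ := by
  unfold nu
  have hsum : (∑ x1, hiD G D x1 * (stepWt G x0 x1 * stepWt G x1 b)) ≤ D⁻¹ := by
    calc (∑ x1, hiD G D x1 * (stepWt G x0 x1 * stepWt G x1 b))
        ≤ ∑ x1, stepWt G x0 x1 * D⁻¹ := by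
          refine Finset.sum_le_sum fun x1 _ => ?_
          unfold hiD
          split
          · rename_i hx
            rw [one_mul]
            exact mul_le_mul_of_nonneg_left (stepWt_le_invD G D hD hx b)
              (stepWt_nonneg G x0 x1)
          · rw [zero_mul]
            exact mul_nonneg (stepWt_nonneg G _ _) (by positivity)
      _ = D⁻¹ := by rw [← Finset.sum_mul, sum_stepWt G (hdeg x0), one_mul]
  calc hiD G D b * ∑ x1, hiD G D x1 * (stepWt G x0 x1 * stepWt G x1 b)
      ≤ 1 * D⁻¹ := by
        apply mul_le_mul (hiD_le_one G D b) hsum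
          (Finset.sum_nonneg fun x1 _ => mul_nonneg (hiD_nonneg G D x1)
            (mul_nonneg (stepWt_nonneg G _ _) (stepWt_nonneg G _ _))) zero_le_one
    _ = D⁻¹ := one_mul _

lemma dist_le_two_of_adj_adj {G : SimpleGraph V} {x0 a b : V}
    (h1 : G.Adj x0 a) (h2 : G.Adj a b) : G.dist x0 b ≤ 2 := by
  have := SimpleGraph.dist_le (SimpleGraph.Walk.cons h1 (SimpleGraph.Walk.cons h2
    SimpleGraph.Walk.nil))
  simpa using this

lemma nu_ne_zero {b : V} (h : nu G x0 D b ≠ 0) :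
    D < (G.degree b : ℝ) ∧ G.dist x0 b ≤ 2 := by
  unfold nu at h
  obtain ⟨hb, hsum⟩ := mul_ne_zero_iff.mp h
  have hDb : D < (G.degree b : ℝ) := by
    by_contra hc; simp [hiD, hc] at hb
  refine ⟨hDb, ?_⟩
  obtain ⟨x1, _, hx1⟩ := Finset.exists_ne_zero_of_sum_ne_zero hsum
  obtain ⟨-, hss⟩ := mul_ne_zero_iff.mp hx1
  obtain ⟨hs1, hs2⟩ := mul_ne_zero_iff.mp hss
  exact dist_le_two_of_adj_adj (adj_of_stepWt_ne_zero hs1) (adj_of_stepWt_ne_zero hs2)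

end FourStep

section expand
namespace FourStep
variable {V : Type} [Fintype V]

def tupEquiv (V : Type) : (V × V × V × V × V) ≃ (Fin 5 → V) where
  toFun v := ![v.1, v.2.1, v.2.2.1, v.2.2.2.1, v.2.2.2.2]
  invFun p := (p 0, p 1, p 2, p 3, p 4)
  left_inv v := rfl
  right_inv p := by
    funext i
    fin_cases i <;> rfl

lemma prod_four (G : SimpleGraph V) (p : Fin 5 → V) :
    (∏ i : Fin 4, stepWt G (p i.castSucc) (p i.succ))
      = stepWt G (p 0) (p 1) * stepWt G (p 1) (p 2) * stepWt G (p 2) (p 3)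
          * stepWt G (p 3) (p 4) := by
  rw [Fin.prod_univ_four]
  rfl

lemma walkProb_four (G : SimpleGraph V) (x0 : V) (E : (Fin 5 → V) → Prop) :
    walkProb G 4 x0 E =
      ∑ x1, ∑ x2, ∑ x3, ∑ x4,
        if E ![x0, x1, x2, x3, x4] then
          stepWt G x0 x1 * stepWt G x1 x2 * stepWt G x2 x3 * stepWt G x3 x4
        else 0 := by
  set F : V → V × V × V × V → ℝ := fun a y =>
    if E ![a, y.1, y.2.1, y.2.2.1, y.2.2.2] then
      stepWt G a y.1 * stepWt G y.1 y.2.1 * stepWt G y.2.1 y.2.2.1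
        * stepWt G y.2.2.1 y.2.2.2 else 0 with hF
  have h1 : ∀ v : V × V × V × V × V,
      (if (tupEquiv V v) 0 = x0 ∧ E (tupEquiv V v) then
          ∏ i : Fin 4, stepWt G ((tupEquiv V v) i.castSucc) ((tupEquiv V v) i.succ)
        else 0)
      = (if v.1 = x0 then F v.1 v.2 else 0) := by
    intro v
    rw [prod_four]
    show (if v.1 = x0 ∧ E ![v.1, v.2.1, v.2.2.1, v.2.2.2.1, v.2.2.2.2] then
        stepWt G v.1 v.2.1 * stepWt G v.2.1 v.2.2.1 * stepWt G v.2.2.1 v.2.2.2.1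
          * stepWt G v.2.2.2.1 v.2.2.2.2 else 0) = _
    by_cases h : v.1 = x0 <;> by_cases h2 : E ![v.1, v.2.1, v.2.2.1, v.2.2.2.1, v.2.2.2.2] <;>
      simp [hF, h, h2]
  calc walkProb G 4 x0 E
      = ∑ v : V × V × V × V × V, (if v.1 = x0 then F v.1 v.2 else 0) := by
        unfold walkProb
        rw [← Equiv.sum_comp (tupEquiv V)]
        exact Finset.sum_congr rfl fun v _ => h1 v
    _ = ∑ a : V, ∑ y : V × V × V × V, (if a = x0 then F a y else 0) := by
        rw [Fintype.sum_prod_type]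
    _ = ∑ a : V, (if a = x0 then ∑ y : V × V × V × V, F a y else 0) := by
        refine Finset.sum_congr rfl fun a _ => ?_
        split <;> simp
    _ = ∑ y : V × V × V × V, F x0 y := by
        rw [Finset.sum_ite_eq' Finset.univ x0]
        simp
    _ = _ := by
        rw [Fintype.sum_prod_type]
        refine Finset.sum_congr rfl fun x1 _ => ?_
        rw [Fintype.sum_prod_type]
        refine Finset.sum_congr rfl fun x2 _ => ?_
        rw [Fintype.sum_prod_type]

end FourStep
end expand

section frag2
namespace FourStep
variable {V : Type} [Fintype V] (G : SimpleGraph V) (x0 : V) (D : ℝ)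

lemma mass_ge (hdeg : ∀ v, 0 < G.degree v) (hD : 0 < D) :
    1 - D * (∑ x1, stepWt G x0 x1 * stepWt G x1 x0)
      - D * (∑ x1, ∑ x2, stepWt G x0 x1 * stepWt G x1 x2 * stepWt G x2 x1)
    ≤ ∑ b, nu G x0 D b := by
  have hM : ∑ b, nu G x0 D b
      = ∑ x1, ∑ b, (hiD G D x1 * hiD G D b) * (stepWt G x0 x1 * stepWt G x1 b) := by
    rw [Finset.sum_comm]
    refine Finset.sum_congr rfl fun b _ => ?_
    unfold nu
    rw [Finset.mul_sum]
    exact Finset.sum_congr rfl fun x1 _ => by ring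
  have hone : (1:ℝ) = ∑ x1, ∑ b, stepWt G x0 x1 * stepWt G x1 b := by
    have : ∀ x1 : V, ∑ b, stepWt G x0 x1 * stepWt G x1 b = stepWt G x0 x1 := fun x1 => by
      rw [← Finset.mul_sum, sum_stepWt G (hdeg x1), mul_one]
    rw [Finset.sum_congr rfl fun x1 _ => this x1, sum_stepWt G (hdeg x0)]
  have hterm : ∀ x1 b : V,
      stepWt G x0 x1 * stepWt G x1 b
        - (hiD G D x1 * hiD G D b) * (stepWt G x0 x1 * stepWt G x1 b)
      ≤ D * (stepWt G x0 x1 * stepWt G x1 x0 * stepWt G x1 b)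
        + D * (stepWt G x0 x1 * stepWt G x1 b * stepWt G b x1) := by
    intro x1 b
    have n1 := stepWt_nonneg G x0 x1
    have n2 := stepWt_nonneg G x1 b
    have n3 := stepWt_nonneg G x1 x0
    have n4 := stepWt_nonneg G b x1
    have R1 : 0 ≤ D * (stepWt G x0 x1 * stepWt G x1 x0 * stepWt G x1 b) := by
      apply mul_nonneg hD.le; exact mul_nonneg (mul_nonneg n1 n3) n2
    have R2 : 0 ≤ D * (stepWt G x0 x1 * stepWt G x1 b * stepWt G b x1) := by
      apply mul_nonneg hD.le; exact mul_nonneg (mul_nonneg n1 n2) n4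
    by_cases h1 : D < (G.degree x1 : ℝ)
    · by_cases h2 : D < (G.degree b : ℝ)
      · simp only [hiD, if_pos h1, if_pos h2, one_mul]
        linarith
      · -- low degree at b
        simp only [hiD, if_pos h1, if_neg h2, mul_zero, zero_mul, sub_zero]
        by_cases hz : stepWt G x1 b = 0
        · rw [hz, mul_zero]; linarith
        · have hadj : G.Adj b x1 := (adj_of_stepWt_ne_zero hz).symm
          have e : stepWt G b x1 = ((G.degree b : ℝ))⁻¹ := by simp [stepWt, hadj]
          have hp : (0:ℝ) < (G.degree b : ℝ) := by exact_mod_cast hdeg b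
          have hle : (G.degree b : ℝ) ≤ D := not_lt.mp h2
          have h3 : (1:ℝ) ≤ D * ((G.degree b : ℝ))⁻¹ := by
            calc (1:ℝ) = (G.degree b : ℝ) * ((G.degree b : ℝ))⁻¹ :=
                  (mul_inv_cancel₀ hp.ne').symm
              _ ≤ D * ((G.degree b : ℝ))⁻¹ := by
                  exact mul_le_mul_of_nonneg_right hle (by positivity)
          have key : stepWt G x0 x1 * stepWt G x1 b
              ≤ D * (stepWt G x0 x1 * stepWt G x1 b * stepWt G b x1) := by
            rw [e]
            have hss : 0 ≤ stepWt G x0 x1 * stepWt G x1 b := mul_nonneg n1 n2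
            calc stepWt G x0 x1 * stepWt G x1 b
                = (stepWt G x0 x1 * stepWt G x1 b) * 1 := by ring
              _ ≤ (stepWt G x0 x1 * stepWt G x1 b) * (D * ((G.degree b : ℝ))⁻¹) :=
                  mul_le_mul_of_nonneg_left h3 hss
              _ = D * (stepWt G x0 x1 * stepWt G x1 b * ((G.degree b : ℝ))⁻¹) := by ring
          linarith
    · -- low degree at x1
      simp only [hiD, if_neg h1, zero_mul, sub_zero]
      by_cases hz : stepWt G x0 x1 = 0
      · rw [hz, zero_mul]; linarith
      · have hadj : G.Adj x1 x0 := (adj_of_stepWt_ne_zero hz).symm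
        have e : stepWt G x1 x0 = ((G.degree x1 : ℝ))⁻¹ := by simp [stepWt, hadj]
        have hp : (0:ℝ) < (G.degree x1 : ℝ) := by exact_mod_cast hdeg x1
        have hle : (G.degree x1 : ℝ) ≤ D := not_lt.mp h1
        have h3 : (1:ℝ) ≤ D * ((G.degree x1 : ℝ))⁻¹ := by
          calc (1:ℝ) = (G.degree x1 : ℝ) * ((G.degree x1 : ℝ))⁻¹ :=
                (mul_inv_cancel₀ hp.ne').symm
            _ ≤ D * ((G.degree x1 : ℝ))⁻¹ := by
                exact mul_le_mul_of_nonneg_right hle (by positivity)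
        have key : stepWt G x0 x1 * stepWt G x1 b
            ≤ D * (stepWt G x0 x1 * stepWt G x1 x0 * stepWt G x1 b) := by
          rw [e]
          have hss : 0 ≤ stepWt G x0 x1 * stepWt G x1 b := mul_nonneg n1 n2
          calc stepWt G x0 x1 * stepWt G x1 b
              = (stepWt G x0 x1 * stepWt G x1 b) * 1 := by ring
            _ ≤ (stepWt G x0 x1 * stepWt G x1 b) * (D * ((G.degree x1 : ℝ))⁻¹) :=
                mul_le_mul_of_nonneg_left h3 hss
            _ = D * (stepWt G x0 x1 * ((G.degree x1 : ℝ))⁻¹ * stepWt G x1 b) := by ring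
        linarith
  have main : ∑ x1, ∑ b, (stepWt G x0 x1 * stepWt G x1 b
        - (hiD G D x1 * hiD G D b) * (stepWt G x0 x1 * stepWt G x1 b))
      ≤ ∑ x1, ∑ b, (D * (stepWt G x0 x1 * stepWt G x1 x0 * stepWt G x1 b)
        + D * (stepWt G x0 x1 * stepWt G x1 b * stepWt G b x1)) := by
    refine Finset.sum_le_sum fun x1 _ => Finset.sum_le_sum fun b _ => hterm x1 b
  have lhs_eq : ∑ x1, ∑ b, (stepWt G x0 x1 * stepWt G x1 b
        - (hiD G D x1 * hiD G D b) * (stepWt G x0 x1 * stepWt G x1 b))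
      = 1 - ∑ b, nu G x0 D b := by
    rw [hM, hone]
    rw [← Finset.sum_sub_distrib]
    exact Finset.sum_congr rfl fun x1 _ => by rw [← Finset.sum_sub_distrib]
  have rhs_eq : ∑ x1, ∑ b, (D * (stepWt G x0 x1 * stepWt G x1 x0 * stepWt G x1 b)
        + D * (stepWt G x0 x1 * stepWt G x1 b * stepWt G b x1))
      = D * (∑ x1, stepWt G x0 x1 * stepWt G x1 x0)
        + D * (∑ x1, ∑ x2, stepWt G x0 x1 * stepWt G x1 x2 * stepWt G x2 x1) := by
    have e1 : ∀ x1 : V, ∑ b, D * (stepWt G x0 x1 * stepWt G x1 x0 * stepWt G x1 b)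
        = D * (stepWt G x0 x1 * stepWt G x1 x0) := by
      intro x1
      rw [show (fun b => D * (stepWt G x0 x1 * stepWt G x1 x0 * stepWt G x1 b))
          = (fun b => (D * (stepWt G x0 x1 * stepWt G x1 x0)) * stepWt G x1 b) from
          funext fun b => by ring]
      rw [← Finset.mul_sum, sum_stepWt G (hdeg x1), mul_one]
    calc ∑ x1, ∑ b, (D * (stepWt G x0 x1 * stepWt G x1 x0 * stepWt G x1 b)
          + D * (stepWt G x0 x1 * stepWt G x1 b * stepWt G b x1))
        = ∑ x1, ((∑ b, D * (stepWt G x0 x1 * stepWt G x1 x0 * stepWt G x1 b))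
            + (∑ b, D * (stepWt G x0 x1 * stepWt G x1 b * stepWt G b x1))) := by
          exact Finset.sum_congr rfl fun x1 _ => Finset.sum_add_distrib
      _ = (∑ x1, D * (stepWt G x0 x1 * stepWt G x1 x0))
            + ∑ x1, ∑ b, D * (stepWt G x0 x1 * stepWt G x1 b * stepWt G b x1) := by
          rw [Finset.sum_add_distrib]
          congr 1
          exact Finset.sum_congr rfl fun x1 _ => e1 x1
      _ = D * (∑ x1, stepWt G x0 x1 * stepWt G x1 x0)
            + D * (∑ x1, ∑ x2, stepWt G x0 x1 * stepWt G x1 x2 * stepWt G x2 x1) := by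
          rw [Finset.mul_sum, Finset.mul_sum]
          congr 1
          refine Finset.sum_congr rfl fun x1 _ => ?_
          rw [Finset.mul_sum]
  rw [lhs_eq, rhs_eq] at main
  linarith

end FourStep
end frag2

section frag3
namespace FourStep
variable {V : Type} [Fintype V] (G : SimpleGraph V) (x0 : V) (D : ℝ)

noncomputable def PPterm (x1 x2 x3 x4 : V) : ℝ :=
  if G.dist x0 x4 < 4 then
    stepWt G x0 x1 * stepWt G x1 x2 * stepWt G x2 x3 * stepWt G x3 x4
  else 0

noncomputable def PP : ℝ := ∑ x1, ∑ x2, ∑ x3, ∑ x4, PPterm G x0 x1 x2 x3 x4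

noncomputable def a01 (t b : V) : ℝ := if G.Adj t b then 1 else 0

noncomputable def ind2 (x : V) : ℝ := if G.dist x0 x ≤ 2 then 1 else 0

noncomputable def ntil (t : V) : ℝ :=
  ∑ b, nu G x0 D b * ((G.degree b : ℝ))⁻¹ * a01 G t b

lemma a01_nonneg (t b : V) : 0 ≤ a01 G t b := by unfold a01; split <;> norm_num

lemma ind2_nonneg (x : V) : 0 ≤ ind2 G x0 x := by unfold ind2; split <;> norm_num

lemma nu_nonneg (b : V) : 0 ≤ nu G x0 D b := by
  unfold nu
  refine mul_nonneg (hiD_nonneg G D b) (Finset.sum_nonneg fun x1 _ => ?_)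
  exact mul_nonneg (hiD_nonneg G D x1)
    (mul_nonneg (stepWt_nonneg G _ _) (stepWt_nonneg G _ _))

lemma ntil_nonneg (t : V) : 0 ≤ ntil G x0 D t := by
  unfold ntil
  refine Finset.sum_nonneg fun b _ => ?_
  have h : (0:ℝ) ≤ ((G.degree b : ℝ))⁻¹ := by positivity
  exact mul_nonneg (mul_nonneg (nu_nonneg G x0 D b) h) (a01_nonneg G t b)

lemma PPterm_nonneg (x1 x2 x3 x4 : V) : 0 ≤ PPterm G x0 x1 x2 x3 x4 := by
  unfold PPterm
  split
  · exact mul_nonneg (mul_nonneg (mul_nonneg (stepWt_nonneg G _ _) (stepWt_nonneg G _ _))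
      (stepWt_nonneg G _ _)) (stepWt_nonneg G _ _)
  · exact le_refl 0

lemma dist_lt_four_of_adj_adj {G : SimpleGraph V} {x0 a b : V}
    (h1 : G.Adj x0 a) (h2 : G.Adj a b) : G.dist x0 b < 4 :=
  lt_of_le_of_lt (dist_le_two_of_adj_adj h1 h2) (by norm_num : (2:ℕ) < 4)

lemma A_le_PP (hdeg : ∀ v, 0 < G.degree v) :
    (∑ x1, stepWt G x0 x1 * stepWt G x1 x0) ≤ PP G x0 := by
  unfold PP
  refine Finset.sum_le_sum fun x1 _ => ?_
  have step2 : stepWt G x0 x1 * stepWt G x1 x0 ≤ ∑ x3, ∑ x4, PPterm G x0 x1 x0 x3 x4 := by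
    have hfac : ∑ x3, ∑ x4, (stepWt G x0 x1 * stepWt G x1 x0) * (stepWt G x0 x3 * stepWt G x3 x4)
        = stepWt G x0 x1 * stepWt G x1 x0 := by
      have h1 : ∀ x3 : V, ∑ x4, (stepWt G x0 x1 * stepWt G x1 x0) * (stepWt G x0 x3 * stepWt G x3 x4)
          = (stepWt G x0 x1 * stepWt G x1 x0) * stepWt G x0 x3 := by
        intro x3
        rw [show (fun x4 => (stepWt G x0 x1 * stepWt G x1 x0) * (stepWt G x0 x3 * stepWt G x3 x4))
            = (fun x4 => ((stepWt G x0 x1 * stepWt G x1 x0) * stepWt G x0 x3) * stepWt G x3 x4)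
            from funext fun x4 => by ring]
        rw [← Finset.mul_sum, sum_stepWt G (hdeg x3), mul_one]
      rw [Finset.sum_congr rfl fun x3 _ => h1 x3, ← Finset.mul_sum, sum_stepWt G (hdeg x0),
        mul_one]
    rw [← hfac]
    refine Finset.sum_le_sum fun x3 _ => Finset.sum_le_sum fun x4 _ => ?_
    by_cases hz1 : stepWt G x0 x3 = 0
    · rw [hz1, zero_mul, mul_zero]; exact PPterm_nonneg G x0 _ _ _ _
    by_cases hz2 : stepWt G x3 x4 = 0
    · rw [hz2, mul_zero, mul_zero]; exact PPterm_nonneg G x0 _ _ _ _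
    have hdist := dist_lt_four_of_adj_adj (adj_of_stepWt_ne_zero hz1) (adj_of_stepWt_ne_zero hz2)
    unfold PPterm
    rw [if_pos hdist]
    exact le_of_eq (by ring)
  refine step2.trans ?_
  exact Finset.single_le_sum (f := fun x2 => ∑ x3, ∑ x4, PPterm G x0 x1 x2 x3 x4)
    (fun x2 _ => Finset.sum_nonneg fun x3 _ => Finset.sum_nonneg fun x4 _ =>
      PPterm_nonneg G x0 _ _ _ _)
    (Finset.mem_univ x0)

lemma B_le_PP (hdeg : ∀ v, 0 < G.degree v) :
    (∑ x1, ∑ x2, stepWt G x0 x1 * stepWt G x1 x2 * stepWt G x2 x1) ≤ PP G x0 := by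
  unfold PP
  refine Finset.sum_le_sum fun x1 _ => Finset.sum_le_sum fun x2 _ => ?_
  have step2 : stepWt G x0 x1 * stepWt G x1 x2 * stepWt G x2 x1
      ≤ ∑ x4, PPterm G x0 x1 x2 x1 x4 := by
    have hfac : ∑ x4, (stepWt G x0 x1 * stepWt G x1 x2 * stepWt G x2 x1) * stepWt G x1 x4
        = stepWt G x0 x1 * stepWt G x1 x2 * stepWt G x2 x1 := by
      rw [← Finset.mul_sum, sum_stepWt G (hdeg x1), mul_one]
    rw [← hfac]
    refine Finset.sum_le_sum fun x4 _ => ?_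
    by_cases hz1 : stepWt G x0 x1 = 0
    · have hz : stepWt G x0 x1 * stepWt G x1 x2 * stepWt G x2 x1 * stepWt G x1 x4 = 0 := by
        rw [hz1]; ring
      rw [hz]
      exact PPterm_nonneg G x0 _ _ _ _
    by_cases hz2 : stepWt G x1 x4 = 0
    · rw [hz2, mul_zero]; exact PPterm_nonneg G x0 _ _ _ _
    have hdist := dist_lt_four_of_adj_adj (adj_of_stepWt_ne_zero hz1) (adj_of_stepWt_ne_zero hz2)
    unfold PPterm
    rw [if_pos hdist]
  refine step2.trans ?_
  exact Finset.single_le_sum (f := fun x3 => ∑ x4, PPterm G x0 x1 x2 x3 x4)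
    (fun x3 _ => Finset.sum_nonneg fun x4 _ => PPterm_nonneg G x0 _ _ _ _)
    (Finset.mem_univ x1)

end FourStep
end frag3

section frag4
namespace FourStep
variable {V : Type} [Fintype V] (G : SimpleGraph V) (x0 : V) (D : ℝ)

lemma degree_pos (hconn : G.Connected) (hcard : 2 ≤ Fintype.card V) (v : V) :
    0 < G.degree v := by
  rw [SimpleGraph.degree_pos_iff_exists_adj]
  obtain ⟨w, hw⟩ := Fintype.exists_ne_of_one_lt_card hcard v
  obtain ⟨p⟩ := hconn v w
  cases p with
  | nil => exact absurd rfl hw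
  | cons h _ => exact ⟨_, h⟩

lemma inner3_ge (hdeg : ∀ v, 0 < G.degree v) (hD : 0 < D) (t : V) :
    D^2 * (ntil G x0 D t * ((G.degree t : ℝ))⁻¹)
      ≤ ∑ x4, stepWt G t x4 * ind2 G x0 x4 := by
  have e1 : ∀ x4 : V, stepWt G t x4 * ind2 G x0 x4
      = ((G.degree t : ℝ))⁻¹ * (a01 G t x4 * ind2 G x0 x4) := by
    intro x4; unfold stepWt a01; split <;> ring
  rw [Finset.sum_congr rfl fun x4 _ => e1 x4, ← Finset.mul_sum]
  have key : D^2 * ntil G x0 D t ≤ ∑ x4, a01 G t x4 * ind2 G x0 x4 := by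
    have expand : D^2 * ntil G x0 D t
        = ∑ b, D^2 * (nu G x0 D b * ((G.degree b : ℝ))⁻¹ * a01 G t b) := by
      unfold ntil; rw [Finset.mul_sum]
    rw [expand]
    refine Finset.sum_le_sum fun b _ => ?_
    by_cases hnu : nu G x0 D b = 0
    · rw [hnu, zero_mul, zero_mul, mul_zero]
      exact mul_nonneg (a01_nonneg G t b) (ind2_nonneg G x0 b)
    · obtain ⟨hDb, hdist⟩ := nu_ne_zero G x0 D hnu
      have h1 : nu G x0 D b ≤ D⁻¹ := nu_le G x0 D hdeg hD b
      have h2 : ((G.degree b : ℝ))⁻¹ ≤ D⁻¹ := inv_anti₀ hD hDb.le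
      have hi2 : ind2 G x0 b = 1 := by unfold ind2; rw [if_pos hdist]
      unfold a01
      split
      · rw [mul_one, one_mul, hi2]
        have hmul : nu G x0 D b * ((G.degree b : ℝ))⁻¹ ≤ D⁻¹ * D⁻¹ :=
          mul_le_mul h1 h2 (by positivity) (by positivity)
        calc D^2 * (nu G x0 D b * ((G.degree b : ℝ))⁻¹)
            ≤ D^2 * (D⁻¹ * D⁻¹) := mul_le_mul_of_nonneg_left hmul (by positivity)
          _ = 1 := by
              rw [pow_two]
              field_simp
      · simp
  calc D^2 * (ntil G x0 D t * ((G.degree t : ℝ))⁻¹)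
      = (D^2 * ntil G x0 D t) * ((G.degree t : ℝ))⁻¹ := by ring
    _ ≤ (∑ x4, a01 G t x4 * ind2 G x0 x4) * ((G.degree t : ℝ))⁻¹ :=
        mul_le_mul_of_nonneg_right key (by positivity)
    _ = ((G.degree t : ℝ))⁻¹ * ∑ x4, a01 G t x4 * ind2 G x0 x4 := by ring

end FourStep
end frag4

section frag5
namespace FourStep
variable {V : Type} [Fintype V] (G : SimpleGraph V) (x0 : V) (D : ℝ)

lemma J1 (t : V) :
    ∑ x2, ∑ x1, hiD G D x1 * hiD G D x2
        * (stepWt G x0 x1 * stepWt G x1 x2 * stepWt G x2 t)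
      = ntil G x0 D t := by
  unfold ntil
  refine Finset.sum_congr rfl fun b _ => ?_
  have e : nu G x0 D b * ((G.degree b : ℝ))⁻¹ * a01 G t b = nu G x0 D b * stepWt G b t := by
    unfold a01 stepWt
    by_cases h : G.Adj b t
    · rw [if_pos h, if_pos h.symm, mul_one]
    · rw [if_neg h, if_neg fun hc => h hc.symm, mul_zero, mul_zero]
  rw [e]
  unfold nu
  rw [Finset.mul_sum, Finset.sum_mul]
  refine Finset.sum_congr rfl fun x1 _ => ?_
  ring

lemma reorder_PP :
    ∑ x3, ∑ x2, ∑ x1, ∑ x4, PPterm G x0 x1 x2 x3 x4 = PP G x0 := by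
  unfold PP
  calc ∑ x3, ∑ x2, ∑ x1, ∑ x4, PPterm G x0 x1 x2 x3 x4
      = ∑ x2, ∑ x3, ∑ x1, ∑ x4, PPterm G x0 x1 x2 x3 x4 := Finset.sum_comm
    _ = ∑ x2, ∑ x1, ∑ x3, ∑ x4, PPterm G x0 x1 x2 x3 x4 :=
        Finset.sum_congr rfl fun x2 _ => Finset.sum_comm
    _ = ∑ x1, ∑ x2, ∑ x3, ∑ x4, PPterm G x0 x1 x2 x3 x4 := Finset.sum_comm

lemma chain_le_PP (hdeg : ∀ v, 0 < G.degree v) (hD : 0 < D) :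
    D^2 * ∑ t, ntil G x0 D t * (ntil G x0 D t * ((G.degree t : ℝ))⁻¹) ≤ PP G x0 := by
  have hc_nonneg : ∀ x1 x2 x3 : V, 0 ≤ hiD G D x1 * hiD G D x2
      * (stepWt G x0 x1 * stepWt G x1 x2 * stepWt G x2 x3) := by
    intro x1 x2 x3
    exact mul_nonneg (mul_nonneg (hiD_nonneg G D x1) (hiD_nonneg G D x2))
      (mul_nonneg (mul_nonneg (stepWt_nonneg G _ _) (stepWt_nonneg G _ _)) (stepWt_nonneg G _ _))
  calc D^2 * ∑ t, ntil G x0 D t * (ntil G x0 D t * ((G.degree t : ℝ))⁻¹)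
      = ∑ x3, (∑ x2, ∑ x1, hiD G D x1 * hiD G D x2
          * (stepWt G x0 x1 * stepWt G x1 x2 * stepWt G x2 x3))
          * (D^2 * (ntil G x0 D x3 * ((G.degree x3 : ℝ))⁻¹)) := by
        rw [Finset.mul_sum]
        refine Finset.sum_congr rfl fun t _ => ?_
        rw [J1 G x0 D t]
        ring
    _ ≤ ∑ x3, (∑ x2, ∑ x1, hiD G D x1 * hiD G D x2
          * (stepWt G x0 x1 * stepWt G x1 x2 * stepWt G x2 x3))
          * (∑ x4, stepWt G x3 x4 * ind2 G x0 x4) := by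
        refine Finset.sum_le_sum fun x3 _ => ?_
        exact mul_le_mul_of_nonneg_left (inner3_ge G x0 D hdeg hD x3)
          (Finset.sum_nonneg fun x2 _ => Finset.sum_nonneg fun x1 _ => hc_nonneg x1 x2 x3)
    _ = ∑ x3, ∑ x2, ∑ x1, ∑ x4, (hiD G D x1 * hiD G D x2
          * (stepWt G x0 x1 * stepWt G x1 x2 * stepWt G x2 x3))
          * (stepWt G x3 x4 * ind2 G x0 x4) := by
        refine Finset.sum_congr rfl fun x3 _ => ?_
        rw [Finset.sum_mul]
        refine Finset.sum_congr rfl fun x2 _ => ?_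
        rw [Finset.sum_mul]
        refine Finset.sum_congr rfl fun x1 _ => ?_
        rw [Finset.mul_sum]
    _ ≤ ∑ x3, ∑ x2, ∑ x1, ∑ x4, PPterm G x0 x1 x2 x3 x4 := by
        refine Finset.sum_le_sum fun x3 _ => Finset.sum_le_sum fun x2 _ =>
          Finset.sum_le_sum fun x1 _ => Finset.sum_le_sum fun x4 _ => ?_
        by_cases hd : G.dist x0 x4 ≤ 2
        · have hd4 : G.dist x0 x4 < 4 := lt_of_le_of_lt hd (by norm_num : (2:ℕ) < 4)
          unfold PPterm ind2
          rw [if_pos hd4, if_pos hd, mul_one]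
          have h01 : hiD G D x1 * hiD G D x2 ≤ 1 := by
            nlinarith [hiD_nonneg G D x1, hiD_le_one G D x1, hiD_nonneg G D x2,
              hiD_le_one G D x2]
          have hw : 0 ≤ stepWt G x0 x1 * stepWt G x1 x2 * stepWt G x2 x3 * stepWt G x3 x4 :=
            mul_nonneg (mul_nonneg (mul_nonneg (stepWt_nonneg G _ _) (stepWt_nonneg G _ _))
              (stepWt_nonneg G _ _)) (stepWt_nonneg G _ _)
          calc hiD G D x1 * hiD G D x2 * (stepWt G x0 x1 * stepWt G x1 x2 * stepWt G x2 x3)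
                * stepWt G x3 x4
              = (hiD G D x1 * hiD G D x2)
                  * (stepWt G x0 x1 * stepWt G x1 x2 * stepWt G x2 x3 * stepWt G x3 x4) := by
                ring
            _ ≤ 1 * (stepWt G x0 x1 * stepWt G x1 x2 * stepWt G x2 x3 * stepWt G x3 x4) :=
                mul_le_mul_of_nonneg_right h01 hw
            _ = stepWt G x0 x1 * stepWt G x1 x2 * stepWt G x2 x3 * stepWt G x3 x4 := one_mul _
        · unfold ind2
          rw [if_neg hd, mul_zero, mul_zero]
          exact PPterm_nonneg G x0 x1 x2 x3 x4
    _ = PP G x0 := reorder_PP G x0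
end FourStep
end frag5

section frag6
namespace FourStep
variable {V : Type} [Fintype V] (G : SimpleGraph V) (x0 : V) (D : ℝ)

lemma cauchy (hdeg : ∀ v, 0 < G.degree v) :
    (∑ t, ntil G x0 D t)^2
      ≤ (∑ t, ntil G x0 D t * (ntil G x0 D t * ((G.degree t : ℝ))⁻¹))
        * ∑ t, (G.degree t : ℝ) := by
  have h := Finset.sum_mul_sq_le_sq_mul_sq Finset.univ
    (fun t => ntil G x0 D t * (Real.sqrt ((G.degree t : ℝ)))⁻¹)
    (fun t => Real.sqrt ((G.degree t : ℝ)))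
  have hpos : ∀ t : V, (0:ℝ) < Real.sqrt ((G.degree t : ℝ)) := by
    intro t
    apply Real.sqrt_pos.mpr
    exact_mod_cast hdeg t
  have e1 : ∀ t : V, ntil G x0 D t * (Real.sqrt ((G.degree t : ℝ)))⁻¹
      * Real.sqrt ((G.degree t : ℝ)) = ntil G x0 D t := by
    intro t
    rw [mul_assoc, inv_mul_cancel₀ (hpos t).ne', mul_one]
  have e2 : ∀ t : V, (ntil G x0 D t * (Real.sqrt ((G.degree t : ℝ)))⁻¹)^2
      = ntil G x0 D t * (ntil G x0 D t * ((G.degree t : ℝ))⁻¹) := by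
    intro t
    have : (0:ℝ) ≤ (G.degree t : ℝ) := by positivity
    rw [mul_pow, inv_pow, Real.sq_sqrt this]
    ring
  have e3 : ∀ t : V, (Real.sqrt ((G.degree t : ℝ)))^2 = (G.degree t : ℝ) := by
    intro t
    exact Real.sq_sqrt (by positivity)
  rw [Finset.sum_congr rfl fun t _ => e1 t, Finset.sum_congr rfl fun t _ => e2 t,
    Finset.sum_congr rfl fun t _ => e3 t] at h
  exact h

lemma sum_ntil (hdeg : ∀ v, 0 < G.degree v) :
    ∑ t, ntil G x0 D t = ∑ b, nu G x0 D b := by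
  unfold ntil
  rw [Finset.sum_comm]
  refine Finset.sum_congr rfl fun b _ => ?_
  have e : ∀ t : V, nu G x0 D b * ((G.degree b : ℝ))⁻¹ * a01 G t b
      = (nu G x0 D b * ((G.degree b : ℝ))⁻¹) * (if G.Adj b t then (1:ℝ) else 0) := by
    intro t
    unfold a01
    by_cases h : G.Adj b t
    · rw [if_pos h, if_pos h.symm]
    · rw [if_neg h, if_neg fun hc => h hc.symm]
  rw [Finset.sum_congr rfl fun t _ => e t, ← Finset.mul_sum, sum_adj_indicator]
  have hb : ((G.degree b : ℝ)) ≠ 0 := by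
    have := hdeg b
    positivity
  field_simp

end FourStep
end frag6

/-- **Four-step lemma.** For a simple random walk `(x_0,x_1,x_2,x_3,x_4)` on a connected
simple graph on `n ≥ 2` vertices, `P( d(x_0,x_4) < 4 ) ≥ 1/(4 n^{2/3})`. -/
theorem four_step_lemma {V : Type} [Fintype V] (G : SimpleGraph V) (n : ℕ) (hn : 2 ≤ n)
    (hcard : Fintype.card V = n) (hconn : G.Connected) (x0 : V) :
    1 / (4 * (n : ℝ) ^ ((2 : ℝ) / 3))
      ≤ walkProb G 4 x0 (fun p => G.dist x0 (p (Fin.last 4)) < 4) := by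
  classical
  have hcard2 : 2 ≤ Fintype.card V := by rw [hcard]; exact hn
  have hdeg : ∀ v, 0 < G.degree v := fun v => FourStep.degree_pos G hconn hcard2 v
  have hnR : (0:ℝ) < (n:ℝ) := by
    have : 0 < n := lt_of_lt_of_le (by norm_num) hn
    exact_mod_cast this
  have hgoal_eq : walkProb G 4 x0 (fun p => G.dist x0 (p (Fin.last 4)) < 4)
      = FourStep.PP G x0 := by
    rw [FourStep.walkProb_four]
    unfold FourStep.PP FourStep.PPterm
    refine Finset.sum_congr rfl fun x1 _ => Finset.sum_congr rfl fun x2 _ =>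
      Finset.sum_congr rfl fun x3 _ => Finset.sum_congr rfl fun x4 _ => ?_
    have hx : (![x0, x1, x2, x3, x4] : Fin 5 → V) (Fin.last 4) = x4 := rfl
    rw [hx]
    by_cases h : G.dist x0 x4 < 4 <;> simp [h]
  rw [hgoal_eq]
  set D : ℝ := (n:ℝ) ^ ((2:ℝ)/3) with hDdef
  have hD : 0 < D := Real.rpow_pos_of_pos hnR _
  have hD3 : D * (D * D) = (n:ℝ) * (n:ℝ) := by
    rw [hDdef, ← Real.rpow_add hnR, ← Real.rpow_add hnR]
    rw [show (2:ℝ)/3 + ((2:ℝ)/3 + (2:ℝ)/3) = ((2:ℕ):ℝ) by norm_num]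
    rw [Real.rpow_natCast]
    ring
  have hA : (∑ x1, stepWt G x0 x1 * stepWt G x1 x0) ≤ FourStep.PP G x0 :=
    FourStep.A_le_PP G x0 hdeg
  have hB : (∑ x1, ∑ x2, stepWt G x0 x1 * stepWt G x1 x2 * stepWt G x2 x1) ≤ FourStep.PP G x0 :=
    FourStep.B_le_PP G x0 hdeg
  have hMge := FourStep.mass_ge G x0 D hdeg hD
  have hchain := FourStep.chain_le_PP G x0 D hdeg hD
  have hQt0 : 0 ≤ ∑ t, FourStep.ntil G x0 D t * (FourStep.ntil G x0 D t * ((G.degree t : ℝ))⁻¹) := by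
    refine Finset.sum_nonneg fun t _ => ?_
    have h1 := FourStep.ntil_nonneg G x0 D t
    have h2 : (0:ℝ) ≤ ((G.degree t : ℝ))⁻¹ := by positivity
    exact mul_nonneg h1 (mul_nonneg h1 h2)
  have hCS : (∑ b, FourStep.nu G x0 D b)^2
      ≤ (∑ t, FourStep.ntil G x0 D t * (FourStep.ntil G x0 D t * ((G.degree t : ℝ))⁻¹))
        * ((n:ℝ) * (n:ℝ)) := by
    have h1 := FourStep.cauchy G x0 D hdeg
    rw [FourStep.sum_ntil G x0 D hdeg] at h1
    have hdegsum : (∑ t, ((G.degree t : ℝ))) ≤ (n:ℝ) * (n:ℝ) := by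
      calc (∑ t, ((G.degree t : ℝ))) ≤ ∑ _t : V, (n:ℝ) := by
            refine Finset.sum_le_sum fun t _ => ?_
            have h2 := G.degree_lt_card_verts t
            rw [hcard] at h2
            exact_mod_cast h2.le
        _ = (Fintype.card V : ℝ) * (n:ℝ) := by
            rw [Finset.sum_const, Finset.card_univ, nsmul_eq_mul]
        _ = (n:ℝ) * (n:ℝ) := by rw [hcard]
    calc (∑ b, FourStep.nu G x0 D b)^2
        ≤ (∑ t, FourStep.ntil G x0 D t * (FourStep.ntil G x0 D t * ((G.degree t : ℝ))⁻¹))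
          * ∑ t, ((G.degree t : ℝ)) := h1
      _ ≤ _ := mul_le_mul_of_nonneg_left hdegsum hQt0
  by_contra hc
  push_neg at hc
  have h14 : D * (1/(4*D)) = 1/4 := by field_simp
  have hDA : D * (∑ x1, stepWt G x0 x1 * stepWt G x1 x0) < 1/4 := by
    have := mul_le_mul_of_nonneg_left hA hD.le
    have h2 : D * FourStep.PP G x0 < D * (1/(4*D)) := mul_lt_mul_of_pos_left hc hD
    linarith
  have hDB : D * (∑ x1, ∑ x2, stepWt G x0 x1 * stepWt G x1 x2 * stepWt G x2 x1) < 1/4 := by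
    have := mul_le_mul_of_nonneg_left hB hD.le
    have h2 : D * FourStep.PP G x0 < D * (1/(4*D)) := mul_lt_mul_of_pos_left hc hD
    linarith
  have hM2 : (1/2 : ℝ) < ∑ b, FourStep.nu G x0 D b := by linarith
  have hnn : (0:ℝ) < (n:ℝ) * (n:ℝ) := by positivity
  have hQtge : ((∑ b, FourStep.nu G x0 D b)^2) / ((n:ℝ) * (n:ℝ))
      ≤ ∑ t, FourStep.ntil G x0 D t * (FourStep.ntil G x0 D t * ((G.degree t : ℝ))⁻¹) :=
    (div_le_iff₀ hnn).mpr hCS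
  have hfinal_eq : D^2 * ((1/2:ℝ)^2 / ((n:ℝ) * (n:ℝ))) = 1/(4*D) := by
    rw [← hD3]
    field_simp
    ring
  have hlt : 1/(4*D) < D^2 * (((∑ b, FourStep.nu G x0 D b)^2) / ((n:ℝ) * (n:ℝ))) := by
    rw [← hfinal_eq]
    have hsq : (1/2:ℝ)^2 < (∑ b, FourStep.nu G x0 D b)^2 := by nlinarith
    exact mul_lt_mul_of_pos_left ((div_lt_div_iff_of_pos_right hnn).mpr hsq) (by positivity)
  have hle : D^2 * (((∑ b, FourStep.nu G x0 D b)^2) / ((n:ℝ) * (n:ℝ)))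
      ≤ D^2 * ∑ t, FourStep.ntil G x0 D t * (FourStep.ntil G x0 D t * ((G.degree t : ℝ))⁻¹) :=
    mul_le_mul_of_nonneg_left hQtge (by positivity)
  linarith
end

section
/- The four-step lemma fails with three steps: for infinitely many n there exist a finite connected simple graph G on n vertices and a vertex x_0 of G such that the simple random walk (x_0, x_1, x_2, x_3) on G started at x_0 satisfies P( d(x_0, x_3) < 3 ) < 4/n. -/
open scoped Classical

namespace ThreeStep

def lvl (m k : ℕ) : ℕ := if k = 0 then 0 else if k = 1 then 1 else if k ≤ m+1 then 2 else 3

lemma lvl_eq_zero_iff {m k : ℕ} : lvl m k = 0 ↔ k = 0 := by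
  unfold lvl; split_ifs <;> simp_all
lemma lvl_eq_one_iff {m k : ℕ} : lvl m k = 1 ↔ k = 1 := by
  unfold lvl; split_ifs <;> simp_all
lemma lvl_eq_two_iff {m k : ℕ} : lvl m k = 2 ↔ 2 ≤ k ∧ k ≤ m+1 := by
  unfold lvl; split_ifs <;> simp_all <;> omega
lemma lvl_eq_three_iff {m k : ℕ} : lvl m k = 3 ↔ m+2 ≤ k := by
  unfold lvl; split_ifs <;> simp_all <;> omega
lemma lvl_cases (m k : ℕ) : lvl m k = 0 ∨ lvl m k = 1 ∨ lvl m k = 2 ∨ lvl m k = 3 := by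
  unfold lvl; split_ifs <;> omega

/-- The layered graph: `0 — 1 — {2,…,m+1} — {m+2,…,2m+1}`, complete between
consecutive layers. -/
def Gr (m : ℕ) : SimpleGraph (Fin (2*m+2)) where
  Adj a b := lvl m a.val + 1 = lvl m b.val ∨ lvl m b.val + 1 = lvl m a.val
  symm := by constructor; intro a b h; tauto
  loopless := by constructor; intro a h; omega

lemma adj_lvl {m : ℕ} {a b : Fin (2*m+2)} (h : (Gr m).Adj a b) :
    lvl m a.val + 1 = lvl m b.val ∨ lvl m b.val + 1 = lvl m a.val := h

def v0 (m : ℕ) : Fin (2*m+2) := ⟨0, by omega⟩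
def v1 (m : ℕ) : Fin (2*m+2) := ⟨1, by omega⟩

lemma lvl_v0 (m : ℕ) : lvl m (v0 m).val = 0 := by simp [v0, lvl]
lemma lvl_v1 (m : ℕ) : lvl m (v1 m).val = 1 := by simp [v1, lvl]

lemma eq_v0_of_lvl {m : ℕ} {b : Fin (2*m+2)} (h : lvl m b.val = 0) : b = v0 m := by
  apply Fin.ext; simpa [v0] using lvl_eq_zero_iff.mp h
lemma eq_v1_of_lvl {m : ℕ} {b : Fin (2*m+2)} (h : lvl m b.val = 1) : b = v1 m := by
  apply Fin.ext; simpa [v1] using lvl_eq_one_iff.mp h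

lemma adj_v0_iff {m : ℕ} {b : Fin (2*m+2)} : (Gr m).Adj (v0 m) b ↔ b = v1 m := by
  constructor
  · rintro (h | h) <;> rw [lvl_v0] at h
    · exact eq_v1_of_lvl h.symm
    · omega
  · rintro rfl; left; rw [lvl_v0, lvl_v1]

lemma adj_v1_iff {m : ℕ} {b : Fin (2*m+2)} :
    (Gr m).Adj (v1 m) b ↔ lvl m b.val = 0 ∨ lvl m b.val = 2 := by
  constructor
  · rintro (h | h) <;> rw [lvl_v1] at h <;> omega
  · rintro (h | h)
    · right; rw [lvl_v1, h]
    · left; rw [lvl_v1, h]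

lemma adj_of_lvl2 {m : ℕ} {c b : Fin (2*m+2)} (hc : lvl m c.val = 2) :
    (Gr m).Adj c b ↔ lvl m b.val = 1 ∨ lvl m b.val = 3 := by
  constructor
  · rintro (h | h) <;> rw [hc] at h <;> omega
  · rintro (h | h)
    · right; rw [hc, h]
    · left; rw [hc, h]

/-- helper for cardinalities -/
lemma card_filter_fin (n : ℕ) (P : ℕ → Prop) [DecidablePred P] :
    (Finset.univ.filter (fun b : Fin n => P b.val)).card
      = ((Finset.range n).filter P).card := by
  rw [Finset.card_filter, Finset.card_filter,
    Fin.sum_univ_eq_sum_range (fun k => if P k then 1 else 0) n]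

lemma degree_eq {m : ℕ} (a : Fin (2*m+2)) (P : ℕ → Prop) [DecidablePred P]
    (h : ∀ b : Fin (2*m+2), (Gr m).Adj a b ↔ P b.val) :
    (Gr m).degree a = ((Finset.range (2*m+2)).filter P).card := by
  rw [← (Gr m).card_neighborFinset_eq_degree, SimpleGraph.neighborFinset_eq_filter]
  rw [← card_filter_fin (2*m+2) P]
  congr 1
  apply Finset.filter_congr
  intro b _
  simp [h b]

lemma deg_v0 (m : ℕ) : (Gr m).degree (v0 m) = 1 := by
  have hP : ∀ b : Fin (2*m+2), (Gr m).Adj (v0 m) b ↔ b.val = 1 := by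
    intro b
    rw [adj_v0_iff]
    constructor
    · rintro rfl; rfl
    · intro h; exact Fin.ext (by simpa [v1] using h)
  rw [degree_eq (v0 m) (fun k => k = 1) hP]
  have h1 : (1:ℕ) ∈ Finset.range (2*m+2) := by simp
  rw [Finset.filter_eq', if_pos h1, Finset.card_singleton]

lemma deg_v1 (m : ℕ) : (Gr m).degree (v1 m) = m + 1 := by
  have hP : ∀ b : Fin (2*m+2), (Gr m).Adj (v1 m) b ↔ (b.val = 0 ∨ (2 ≤ b.val ∧ b.val ≤ m+1)) := by
    intro b; rw [adj_v1_iff, lvl_eq_zero_iff, lvl_eq_two_iff]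
  rw [degree_eq (v1 m) (fun k => k = 0 ∨ (2 ≤ k ∧ k ≤ m+1)) hP]
  have : (Finset.range (2*m+2)).filter (fun k => k = 0 ∨ (2 ≤ k ∧ k ≤ m+1))
      = insert 0 (Finset.Ico 2 (m+2)) := by
    ext k
    simp only [Finset.mem_filter, Finset.mem_range, Finset.mem_insert, Finset.mem_Ico]
    omega
  rw [this, Finset.card_insert_of_notMem (by simp), Nat.card_Ico]
  omega

lemma deg_lvl2 {m : ℕ} {c : Fin (2*m+2)} (hc : lvl m c.val = 2) :
    (Gr m).degree c = m + 1 := by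
  have hP : ∀ b : Fin (2*m+2), (Gr m).Adj c b ↔ (b.val = 1 ∨ m+2 ≤ b.val) := by
    intro b; rw [adj_of_lvl2 hc, lvl_eq_one_iff, lvl_eq_three_iff]
  rw [degree_eq c (fun k => k = 1 ∨ m+2 ≤ k) hP]
  have : (Finset.range (2*m+2)).filter (fun k => k = 1 ∨ m+2 ≤ k)
      = insert 1 (Finset.Ico (m+2) (2*m+2)) := by
    ext k
    simp only [Finset.mem_filter, Finset.mem_range, Finset.mem_insert, Finset.mem_Ico]
    omega
  rw [this, Finset.card_insert_of_notMem (by simp [Finset.mem_Ico]), Nat.card_Ico]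
  omega

lemma card_lvl2 (m : ℕ) :
    (Finset.univ.filter (fun b : Fin (2*m+2) => lvl m b.val = 2)).card = m := by
  rw [card_filter_fin (2*m+2) (fun k => lvl m k = 2)]
  have : (Finset.range (2*m+2)).filter (fun k => lvl m k = 2) = Finset.Ico 2 (m+2) := by
    ext k
    simp only [Finset.mem_filter, Finset.mem_range, Finset.mem_Ico, lvl_eq_two_iff]
    omega
  rw [this, Nat.card_Ico]
  omega

lemma conn (m : ℕ) (hm : 1 ≤ m) : (Gr m).Connected := by
  have key : ∀ b : Fin (2*m+2), (Gr m).Reachable (v0 m) b := by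
    intro b
    have h01 : (Gr m).Adj (v0 m) (v1 m) := adj_v0_iff.mpr rfl
    rcases lvl_cases m b.val with h | h | h | h
    · rw [eq_v0_of_lvl h]
    · rw [eq_v1_of_lvl h]; exact h01.reachable
    · exact h01.reachable.trans ((adj_v1_iff.mpr (Or.inr h)).reachable)
    · have h2 : lvl m 2 = 2 := lvl_eq_two_iff.mpr ⟨le_refl 2, by omega⟩
      have h2' : lvl m ((⟨2, by omega⟩ : Fin (2*m+2)).val) = 2 := h2
      have hadj : (Gr m).Adj (⟨2, by omega⟩ : Fin (2*m+2)) b := by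
        rw [adj_of_lvl2 h2']; right; exact h
      exact (h01.reachable.trans ((adj_v1_iff.mpr (Or.inr h2')).reachable)).trans
        hadj.reachable
  exact (SimpleGraph.connected_iff_exists_forall_reachable (G := Gr m)).mpr ⟨v0 m, key⟩

lemma lvl_le_of_walk {m : ℕ} {a b : Fin (2*m+2)} (w : (Gr m).Walk a b) :
    lvl m b.val ≤ lvl m a.val + w.length := by
  induction w with
  | nil => simp
  | cons h p ih =>
    have h' := adj_lvl h
    simp only [SimpleGraph.Walk.length_cons]
    omega

lemma not_lt_three_dist {m : ℕ} {b : Fin (2*m+2)} (hm : 1 ≤ m) (h : lvl m b.val = 3) :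
    ¬ (Gr m).dist (v0 m) b < 3 := by
  intro hlt
  obtain ⟨w, hw⟩ := ((conn m hm).preconnected (v0 m) b).exists_walk_length_eq_dist
  have := lvl_le_of_walk w
  rw [hw, lvl_v0, h] at this
  omega

lemma dist_v0_v1_lt (m : ℕ) : (Gr m).dist (v0 m) (v1 m) < 3 := by
  have hadj : (Gr m).Adj (v0 m) (v1 m) := adj_v0_iff.mpr rfl
  have h := SimpleGraph.dist_le hadj.toWalk
  simp at h
  omega

/- step weight values -/

lemma stepWt_v0_v1 (m : ℕ) : stepWt (Gr m) (v0 m) (v1 m) = 1 := by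
  rw [stepWt, if_pos (adj_v0_iff.mpr rfl), deg_v0]
  norm_num

lemma stepWt_v0_ne {m : ℕ} {b : Fin (2*m+2)} (hb : b ≠ v1 m) :
    stepWt (Gr m) (v0 m) b = 0 := by
  rw [stepWt, if_neg]
  rw [adj_v0_iff]
  exact hb

lemma stepWt_v1 {m : ℕ} {c : Fin (2*m+2)} (hc : lvl m c.val = 0 ∨ lvl m c.val = 2) :
    stepWt (Gr m) (v1 m) c = ((m:ℝ)+1)⁻¹ := by
  rw [stepWt, if_pos (adj_v1_iff.mpr hc), deg_v1]
  push_cast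
  ring

lemma stepWt_lvl2_v1 {m : ℕ} {c : Fin (2*m+2)} (hc : lvl m c.val = 2) :
    stepWt (Gr m) c (v1 m) = ((m:ℝ)+1)⁻¹ := by
  rw [stepWt, if_pos ((adj_of_lvl2 hc).mpr (Or.inl (lvl_v1 m))), deg_lvl2 hc]
  push_cast
  ring

/- the quadruple-sum reduction -/

lemma sum_pi_fin4 {V : Type} [Fintype V] (f : (Fin (3 + 1) → V) → ℝ) :
    ∑ p : Fin (3 + 1) → V, f p = ∑ a, ∑ b, ∑ c, ∑ d, f ![a, b, c, d] := by
  have hbij : Function.Bijective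
      (fun q : V × V × V × V => ![q.1, q.2.1, q.2.2.1, q.2.2.2]) := by
    apply Function.bijective_iff_has_inverse.mpr
    refine ⟨fun p => (p 0, p 1, p 2, p 3), ?_, ?_⟩
    · rintro ⟨a, b, c, d⟩
      simp
    · intro p
      funext i
      fin_cases i <;> simp
  rw [← Fintype.sum_bijective _ hbij _ f (fun q => rfl)]
  simp only [Fintype.sum_prod_type]

lemma walkProb_quad {V : Type} [Fintype V] (G : SimpleGraph V) (x0 : V) :
    walkProb G 3 x0 (fun p => G.dist x0 (p (Fin.last 3)) < 3)
      = ∑ a, ∑ b, ∑ c, ∑ d : V,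
          if a = x0 ∧ G.dist x0 d < 3 then stepWt G a b * stepWt G b c * stepWt G c d
          else 0 := by
  simp only [walkProb]
  rw [sum_pi_fin4]
  apply Finset.sum_congr rfl; intro a _
  apply Finset.sum_congr rfl; intro b _
  apply Finset.sum_congr rfl; intro c _
  apply Finset.sum_congr rfl; intro d _
  rw [Fin.prod_univ_three]
  norm_num [Fin.last, Matrix.cons_val_zero, Matrix.cons_val_one, Matrix.head_cons,
    Matrix.cons_val_two, Matrix.cons_val_three, Fin.succ, Fin.castSucc, Fin.castAdd, Fin.castLE]

/- the main computation -/

lemma walkProb_eq (m : ℕ) (hm : 1 ≤ m) :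
    walkProb (Gr m) 3 (v0 m) (fun p => (Gr m).dist (v0 m) (p (Fin.last 3)) < 3)
      = ((m:ℝ)+1)⁻¹ + (m:ℝ) * (((m:ℝ)+1)⁻¹ * ((m:ℝ)+1)⁻¹) := by
  rw [walkProb_quad (Gr m) (v0 m)]
  rw [Finset.sum_eq_single (v0 m)]
  rotate_left
  · intro a _ ha
    simp [ha]
  · intro h
    exact absurd (Finset.mem_univ _) h
  simp only [eq_self_iff_true, true_and]
  rw [Finset.sum_eq_single (v1 m)]
  rotate_left
  · intro b _ hb
    simp [stepWt_v0_ne hb]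
  · intro h
    exact absurd (Finset.mem_univ _) h
  simp only [stepWt_v0_v1, one_mul]
  have hsum : ∀ c : Fin (2*m+2),
      (∑ d : Fin (2*m+2), if (Gr m).dist (v0 m) d < 3
          then stepWt (Gr m) (v1 m) c * stepWt (Gr m) c d else 0)
      = (if c = v0 m then ((m:ℝ)+1)⁻¹
          else if lvl m c.val = 2 then ((m:ℝ)+1)⁻¹ * ((m:ℝ)+1)⁻¹ else 0) := by
    intro c
    by_cases hc0 : c = v0 m
    · subst hc0
      rw [if_pos rfl]
      rw [Finset.sum_eq_single (v1 m)]
      · rw [if_pos (dist_v0_v1_lt m), stepWt_v1 (Or.inl (lvl_v0 m)), stepWt_v0_v1, mul_one]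
      · intro d _ hd
        rw [stepWt_v0_ne hd, mul_zero]
        simp
      · intro h
        exact absurd (Finset.mem_univ _) h
    · rw [if_neg hc0]
      by_cases hc2 : lvl m c.val = 2
      · rw [if_pos hc2]
        rw [Finset.sum_eq_single (v1 m)]
        · rw [if_pos (dist_v0_v1_lt m), stepWt_v1 (Or.inr hc2), stepWt_lvl2_v1 hc2]
        · intro d _ hd
          by_cases hE : (Gr m).dist (v0 m) d < 3
          · have hwd : stepWt (Gr m) c d = 0 := by
              rw [stepWt, if_neg]
              rw [adj_of_lvl2 hc2]
              rintro (h1 | h3)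
              · exact hd (eq_v1_of_lvl h1)
              · exact not_lt_three_dist hm h3 hE
            rw [if_pos hE, hwd, mul_zero]
          · rw [if_neg hE]
        · intro h
          exact absurd (Finset.mem_univ _) h
      · rw [if_neg hc2]
        have hw : stepWt (Gr m) (v1 m) c = 0 := by
          rw [stepWt, if_neg]
          rw [adj_v1_iff]
          rintro (h | h)
          · exact hc0 (eq_v0_of_lvl h)
          · exact hc2 h
        simp [hw]
  rw [Finset.sum_congr rfl (fun c _ => hsum c)]
  rw [← Finset.add_sum_erase _ _ (Finset.mem_univ (v0 m)), if_pos rfl]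
  congr 1
  have hrw : ∀ c ∈ Finset.univ.erase (v0 m),
      (if c = v0 m then ((m:ℝ)+1)⁻¹
        else if lvl m c.val = 2 then ((m:ℝ)+1)⁻¹ * ((m:ℝ)+1)⁻¹ else 0)
      = (if lvl m c.val = 2 then ((m:ℝ)+1)⁻¹ * ((m:ℝ)+1)⁻¹ else 0) :=
    fun c hc => if_neg (Finset.ne_of_mem_erase hc)
  rw [Finset.sum_congr rfl hrw, Finset.sum_ite, Finset.sum_const, Finset.sum_const_zero,
    add_zero, Finset.filter_erase, Finset.erase_eq_of_notMem (by
      simp only [Finset.mem_filter]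
      rintro ⟨-, h⟩
      rw [lvl_v0] at h
      omega), card_lvl2, nsmul_eq_mul]

end ThreeStep

open ThreeStep

/-- **The four-step lemma fails with three steps:** for infinitely many `n` there is a
connected simple graph `G` on `n` vertices and a start vertex `x0` with
`P( d(x_0,x_3) < 3 ) < 4/n`. -/
theorem three_step_lemma_fails :
    ∀ N : ℕ, ∃ n : ℕ, N ≤ n ∧ ∃ G : SimpleGraph (Fin n), G.Connected ∧ ∃ x0 : Fin n,
      walkProb G 3 x0 (fun p => G.dist x0 (p (Fin.last 3)) < 3) < 4 / n := by
  intro N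
  set m := max N 1 with hmdef
  have hm : 1 ≤ m := le_max_right N 1
  have hNm : N ≤ m := le_max_left N 1
  refine ⟨2*m+2, by omega, Gr m, conn m hm, v0 m, ?_⟩
  rw [walkProb_eq m hm]
  have hx : (0:ℝ) < (m:ℝ) + 1 := by positivity
  have hn : ((2*m+2 : ℕ) : ℝ) = 2*((m:ℝ)+1) := by push_cast; ring
  rw [hn]
  have h1 : ((m:ℝ)+1)⁻¹ + (m:ℝ) * (((m:ℝ)+1)⁻¹ * ((m:ℝ)+1)⁻¹)
      = (2*(m:ℝ)+1)/(((m:ℝ)+1)^2) := by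
    field_simp
    ring
  have h2 : (4:ℝ) / (2*((m:ℝ)+1)) = 2/((m:ℝ)+1) := by
    rw [div_eq_div_iff (by positivity) (by positivity)]
    ring
  rw [h1, h2, div_lt_div_iff₀ (by positivity) (by positivity)]
  nlinarith [hx]
end
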